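/- Let α > 1 be the real root exceeding 1 of p(X) = X⁴ − X³ − X² − X + 1, and suppose ℕ₀[α] is atomic with atoms {α^n : n ∈ ℕ₀}. Then the catenary degree of ℕ₀[α] is infinite. -/

import Mathlib

/-- `a` is an (additive) atom of the submonoid `S`. -/
def IsAddAtomIn {R : Type*} [AddCommMonoid R] (S : AddSubmonoid R) (a : R) : Prop :=
  a ∈ S ∧ a ≠ 0 ∧ ∀ u v, u ∈ S → v ∈ S → u ≠ 0 → v ≠ 0 → a ≠ u + v

/-- The distance between two factorizations (multisets of atoms):
`d(z, w) = max(|z| - |gcd(z,w)|, |w| - |gcd(z,w)|)`, where `gcd` is the common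
sub-multiset `z ∩ w`. -/
noncomputable def factDist {R : Type*} (z w : Multiset R) : ℕ :=
  letI := Classical.decEq R
  max (z.card - (z ∩ w).card) (w.card - (z ∩ w).card)

/-- Let `α > 1` be the real root of `X⁴ - X³ - X² - X + 1` exceeding `1`, with `ℕ₀[α]`
atomic with atoms `{α^n}`. Then the catenary degree of `ℕ₀[α]` is infinite: there is no
`N ∈ ℕ` such that any two factorizations of any element of `ℕ₀[α]` can be connected by an
`N`-chain of factorizations. -/

lemma long_id (α : ℝ) (hroot : α ^ 4 - α ^ 3 - α ^ 2 - α + 1 = 0) :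
    ∀ k : ℕ, 1 ≤ k → α ^ (3*k+1) + 1 = α ^ (3*k) + α + ∑ j ∈ Finset.range k, α ^ (3*j+2) := by
  intro k hk
  induction k with
  | zero => omega
  | succ n ih =>
    rcases Nat.eq_or_lt_of_le hk with h1 | h1
    · have hn : n = 0 := by omega
      subst hn
      simp [Finset.sum_range_one]
      linear_combination hroot
    · have hn : 1 ≤ n := by omega
      have IH := ih hn
      rw [Finset.sum_range_succ]
      have e1 : 3*(n+1)+1 = 3*n+4 := by ring
      have e2 : 3*(n+1) = 3*n+3 := by ring
      rw [e1, e2]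
      have expand : α ^ (3*n+4) = α^(3*n) * α^4 := by ring
      have expand2 : α ^ (3*n+3) = α^(3*n) * α^3 := by ring
      have expand3 : α ^ (3*n+2) = α^(3*n) * α^2 := by ring
      have expand4 : α ^ (3*n+1) = α^(3*n) * α := by ring
      rw [expand, expand2, expand3] at *
      linear_combination α^(3*n) * hroot + IH


lemma exists_exp (α : ℝ) (w : Multiset ℝ) (h : ∀ a ∈ w, ∃ m : ℕ, a = α ^ m) :
    ∃ S : Multiset ℕ, w = S.map (fun n => α ^ n) := by
  induction w using Multiset.induction_on with
  | empty => exact ⟨0, rfl⟩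
  | cons a s ih =>
    obtain ⟨S, hS⟩ := ih (fun b hb => h b (Multiset.mem_cons_of_mem hb))
    obtain ⟨m, hm⟩ := h a (Multiset.mem_cons_self a s)
    exact ⟨m ::ₘ S, by simp [hm, hS]⟩

lemma transition {k : ℕ} (f : Fin (k+1) → Multiset ℝ) (z : Multiset ℝ)
    (h0 : f 0 = z) (hlast : f (Fin.last k) ≠ z) :
    ∃ i : Fin k, f i.castSucc = z ∧ f i.succ ≠ z := by
  by_contra h
  push_neg at h
  have : ∀ i : Fin (k+1), f i = z := by
    intro i
    induction i using Fin.induction with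
    | zero => exact h0
    | succ i ih => exact h i ih
  exact hlast (this _)

lemma B2 (α : ℝ) (hα : 1 < α) (M : AddSubmonoid ℝ)
    (hM : M = AddSubmonoid.closure (Set.range fun k : ℕ => α ^ k))
    (hatoms : ∀ a, IsAddAtomIn M a ↔ ∃ k : ℕ, a = α ^ k)
    (C d : ℕ) (c : Fin d → Fin (C+1)) :
    (∑ i : Fin d, ((c i : ℕ) : ℝ) * (α⁻¹) ^ ((i : ℕ)+1)) ≠ 1 := by
  intro hsum
  have hα0 : (0:ℝ) < α := lt_trans one_pos hα
  have hmem : ∀ j : ℕ, α ^ j ∈ M := by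
    rw [hM]; exact fun j => AddSubmonoid.subset_closure ⟨j, rfl⟩
  have hpow_pos : ∀ j : ℕ, (0:ℝ) < α ^ j := fun j => pow_pos hα0 j
  -- multiply by α ^ d
  have key : (∑ i : Fin d, ((c i : ℕ) : ℝ) * α ^ (d - ((i:ℕ)+1))) = α ^ d := by
    have h1 := congrArg (· * α ^ d) hsum
    simp only [one_mul] at h1
    rw [Finset.sum_mul] at h1
    rw [← h1]
    apply Finset.sum_congr rfl
    intro i _
    rw [mul_assoc]
    congr 1
    have hi : (i:ℕ) + 1 ≤ d := i.2
    have hsplit : α ^ d = α ^ (d - ((i:ℕ)+1)) * α ^ ((i:ℕ)+1) := by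
      rw [← pow_add, Nat.sub_add_cancel hi]
    rw [hsplit,
      show α⁻¹ ^ ((i:ℕ)+1) * (α ^ (d - ((i:ℕ)+1)) * α ^ ((i:ℕ)+1))
        = α ^ (d - ((i:ℕ)+1)) * (α⁻¹ * α) ^ ((i:ℕ)+1) from by rw [mul_pow]; ring,
      inv_mul_cancel₀ (ne_of_gt hα0), one_pow, mul_one]
  -- total weight
  set w := ∑ i : Fin d, (c i : ℕ) with hw
  have hatom : IsAddAtomIn M (α ^ d) := (hatoms _).mpr ⟨d, rfl⟩
  rcases Nat.lt_or_ge w 1 with hw0 | hw1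
  · -- w = 0 : all coefficients zero
    have hz : ∀ i : Fin d, (c i : ℕ) = 0 := by
      intro i
      exact Finset.sum_eq_zero_iff.mp (by omega : w = 0) i (Finset.mem_univ i)
    have : (∑ i : Fin d, ((c i : ℕ) : ℝ) * α ^ (d - ((i:ℕ)+1))) = 0 :=
      Finset.sum_eq_zero (fun i _ => by rw [hz i]; simp)
    rw [this] at key
    exact absurd key.symm (ne_of_gt (hpow_pos d))
  · obtain ⟨i₀, hi₀⟩ : ∃ i₀ : Fin d, 1 ≤ (c i₀ : ℕ) := by
      by_contra h
      push_neg at h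
      have : w = 0 := Finset.sum_eq_zero (fun i _ => by have := h i; omega)
      omega
    rcases Nat.lt_or_ge w 2 with hw2 | hw2
    · -- w = 1 : single term
      have h1 : (c i₀ : ℕ) ≤ w := Finset.single_le_sum (f := fun i => (c i : ℕ))
        (fun _ _ => Nat.zero_le _) (Finset.mem_univ i₀)
      have hrest : ∀ i : Fin d, i ≠ i₀ → (c i : ℕ) = 0 := by
        intro i hi
        by_contra h
        have h2 : (c i : ℕ) + (c i₀ : ℕ) ≤ w := by
          rw [hw, ← Finset.add_sum_erase Finset.univ (fun i => (c i : ℕ)) (Finset.mem_univ i)]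
          gcongr
          exact Finset.single_le_sum (f := fun i => (c i : ℕ))
            (fun _ _ => Nat.zero_le _) (Finset.mem_erase.mpr ⟨Ne.symm hi, Finset.mem_univ i₀⟩)
        omega
      have hc0 : (c i₀ : ℕ) = 1 := by omega
      have heq : α ^ (d - ((i₀:ℕ)+1)) = α ^ d := by
        rw [← key, Finset.sum_eq_single i₀]
        · rw [hc0]; simp
        · intro i _ hi; rw [hrest i hi]; simp
        · intro h; exact absurd (Finset.mem_univ i₀) h
      have hsm : StrictMono (fun n : ℕ => α ^ n) := fun a b hab => pow_lt_pow_right₀ hα hab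
      have := hsm.injective heq
      have := i₀.2
      omega
    · -- w ≥ 2 : contradiction with atomicity
      set u := α ^ (d - ((i₀:ℕ)+1)) with hu
      have hterm : ∀ i : Fin d,
          (((c i : ℕ) - (if i = i₀ then 1 else 0) : ℕ) : ℝ) * α ^ (d - ((i:ℕ)+1))
          = ((c i : ℕ) : ℝ) * α ^ (d - ((i:ℕ)+1))
            - (if i = i₀ then α ^ (d - ((i:ℕ)+1)) else 0) := by
        intro i
        rcases eq_or_ne i i₀ with rfl | h
        · rw [if_pos rfl, if_pos rfl, Nat.cast_sub hi₀]
          push_cast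
          ring
        · rw [if_neg h, if_neg h]
          simp
      set v := ∑ i : Fin d, (((c i : ℕ) - (if i = i₀ then 1 else 0) : ℕ) : ℝ) * α ^ (d - ((i:ℕ)+1)) with hv
      have hvval : v = α ^ d - u := by
        rw [hv, Finset.sum_congr rfl (fun i _ => hterm i), Finset.sum_sub_distrib, key,
          Finset.sum_ite_eq' Finset.univ i₀ (fun i => α ^ (d - ((i:ℕ)+1)))]
        simp [hu]
      have hvM : v ∈ M := by
        rw [hv]
        apply AddSubmonoid.sum_mem
        intro i _
        rw [← nsmul_eq_mul]
        exact AddSubmonoid.nsmul_mem M (hmem _) _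
      have huM : u ∈ M := hmem _
      have hu0 : u ≠ 0 := ne_of_gt (hpow_pos _)
      obtain ⟨i₁, hi₁⟩ : ∃ i₁ : Fin d, 1 ≤ (c i₁ : ℕ) - (if i₁ = i₀ then 1 else 0) := by
        by_contra h
        push_neg at h
        have hle : ∀ i : Fin d, (c i : ℕ) ≤ if i = i₀ then 1 else 0 := by
          intro i; have := h i; split at this <;> split <;> omega
        have : w ≤ 1 := by
          rw [hw]
          calc ∑ i : Fin d, (c i : ℕ) ≤ ∑ i : Fin d, (if i = i₀ then 1 else 0) :=
              Finset.sum_le_sum (fun i _ => hle i)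
            _ = 1 := by rw [Finset.sum_ite_eq' Finset.univ i₀ (fun _ => 1)]; simp
        omega
      have hv0 : 0 < v := by
        rw [hv]
        calc (0:ℝ) < (((c i₁ : ℕ) - (if i₁ = i₀ then 1 else 0) : ℕ) : ℝ) * α ^ (d - ((i₁:ℕ)+1)) := by
              apply mul_pos _ (hpow_pos _)
              exact_mod_cast Nat.lt_of_lt_of_le Nat.zero_lt_one hi₁
          _ ≤ _ := Finset.single_le_sum
              (f := fun i => (((c i : ℕ) - (if i = i₀ then 1 else 0) : ℕ) : ℝ) * α ^ (d - ((i:ℕ)+1)))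
              (fun i _ => mul_nonneg (Nat.cast_nonneg _) (le_of_lt (hpow_pos _))) (Finset.mem_univ i₁)
      exact hatom.2.2 u v huM hvM hu0 (ne_of_gt hv0) (by rw [hvval]; ring)

lemma stepB (α : ℝ) (hα : 1 < α) (hroot : α ^ 4 - α ^ 3 - α ^ 2 - α + 1 = 0)
    (M : AddSubmonoid ℝ)
    (hM : M = AddSubmonoid.closure (Set.range fun k : ℕ => α ^ k))
    (hatoms : ∀ a, IsAddAtomIn M a ↔ ∃ k : ℕ, a = α ^ k) (C : ℕ) :
    ∃ k₀ : ℕ, 1 ≤ k₀ ∧ ∀ k, k₀ ≤ k → ∀ S : Multiset ℕ, S.card ≤ C →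
      (S.map (fun n => α ^ n)).sum = α ^ (3*k+1) + 1 → S = {3*k+1, 0} := by
  classical
  have hα0 : (0:ℝ) < α := lt_trans one_pos hα
  set γ := α⁻¹ with hγ
  have hγ0 : (0:ℝ) < γ := inv_pos.mpr hα0
  have hγ1 : γ < 1 := inv_lt_one_of_one_lt₀ hα
  -- the finite value sets and gaps
  set V : ℕ → Finset ℝ := fun d =>
    Finset.image (fun c : Fin d → Fin (C+1) => ∑ i : Fin d, ((c i : ℕ) : ℝ) * γ ^ ((i:ℕ)+1))
      Finset.univ with hV
  have hVne : ∀ d, ((V d).image (fun v => |v - 1|)).Nonempty := by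
    intro d
    apply Finset.Nonempty.image
    exact ⟨_, Finset.mem_image_of_mem _ (Finset.mem_univ (fun _ => 0))⟩
  set δ : ℕ → ℝ := fun d => ((V d).image (fun v => |v - 1|)).min' (hVne d) with hδ
  have hδle : ∀ d v, v ∈ V d → δ d ≤ |v - 1| := by
    intro d v hv
    exact Finset.min'_le _ _ (Finset.mem_image_of_mem _ hv)
  have hone : ∀ d v, v ∈ V d → v ≠ 1 := by
    intro d v hv
    rw [hV] at hv
    simp only [Finset.mem_image, Finset.mem_univ, true_and] at hv
    obtain ⟨c, rfl⟩ := hv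
    exact B2 α hα M hM hatoms C d c
  have hδpos : ∀ d, 0 < δ d := by
    intro d
    obtain ⟨y, hy, hyeq⟩ := Finset.mem_image.mp (Finset.min'_mem _ (hVne d))
    rw [hδ]
    simp only
    rw [← hyeq]
    exact abs_pos.mpr (sub_ne_zero.mpr (hone d y hy))
  -- threshold sequence
  have hnext : ∀ d : ℕ, ∃ n : ℕ, d < n ∧ (C:ℝ) * γ ^ n < δ d := by
    intro d
    obtain ⟨n₀, hn₀⟩ : ∃ n₀ : ℕ, γ ^ n₀ < δ d / (C+1) := by
      apply exists_pow_lt_of_lt_one _ hγ1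
      have := hδpos d
      positivity
    refine ⟨max (d+1) n₀, by omega, ?_⟩
    have h1 : γ ^ max (d+1) n₀ ≤ γ ^ n₀ :=
      pow_le_pow_of_le_one (le_of_lt hγ0) (le_of_lt hγ1) (le_max_right _ _)
    have h2 : (C:ℝ) ≥ 0 := Nat.cast_nonneg _
    have h3 : (C:ℝ) * γ ^ max (d+1) n₀ ≤ (C:ℝ) * γ ^ n₀ := by gcongr
    have h4 : (C:ℝ) * γ ^ n₀ ≤ (C+1) * γ ^ n₀ := by
      have := le_of_lt (pow_pos hγ0 n₀); nlinarith
    have h5 : ((C:ℝ)+1) * γ ^ n₀ < (C+1) * (δ d / (C+1)) := by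
      apply mul_lt_mul_of_pos_left hn₀; positivity
    have h6 : ((C:ℝ)+1) * (δ d / (C+1)) = δ d := by field_simp
    linarith
  choose nextD hnextD1 hnextD2 using hnext
  set D : ℕ → ℕ := fun j => nextD^[j] 0 with hD
  have hDsucc : ∀ j, D (j+1) = nextD (D j) := by
    intro j; rw [hD]; simp only; rw [Function.iterate_succ_apply']
  have hDmono : StrictMono D :=
    strictMono_nat_of_lt_succ (fun n => by rw [hDsucc]; exact hnextD1 _)
  -- global gap bound and k₀
  set δmin : ℝ := ((Finset.range (C+1)).image (fun j => δ (D j))).min'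
    (Finset.Nonempty.image (s := Finset.range (C+1))
      ⟨0, Finset.mem_range.mpr (Nat.succ_pos C)⟩ _) with hδmin
  have hδminpos : 0 < δmin := by
    rw [hδmin]
    apply (Finset.lt_min'_iff _ _).mpr
    intro y hy
    obtain ⟨j, hj, rfl⟩ := Finset.mem_image.mp hy
    exact hδpos _
  have hδminle : ∀ j, j ≤ C → δmin ≤ δ (D j) := by
    intro j hj
    exact Finset.min'_le _ _ (Finset.mem_image_of_mem _ (Finset.mem_range.mpr (by omega)))
  obtain ⟨n₁, hn₁⟩ : ∃ n₁ : ℕ, γ ^ n₁ < δmin := exists_pow_lt_of_lt_one hδminpos hγ1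
  refine ⟨n₁ + 1, by omega, ?_⟩
  intro k hk S hcard hsum
  have hk1 : 1 ≤ k := by omega
  have hγk : γ ^ (3*k+1) < δmin := by
    calc γ ^ (3*k+1) ≤ γ ^ n₁ :=
        pow_le_pow_of_le_one (le_of_lt hγ0) (le_of_lt hγ1) (by omega)
      _ < δmin := hn₁
  -- step 1 : all exponents ≤ 3k+1
  have hub : ∀ n ∈ S, n ≤ 3*k+1 := by
    intro n hn
    by_contra hcon
    push_neg at hcon
    obtain ⟨S', rfl⟩ := Multiset.exists_cons_of_mem hn
    rw [Multiset.map_cons, Multiset.sum_cons] at hsum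
    have hrest : (0:ℝ) ≤ (S'.map (fun n => α ^ n)).sum := by
      apply Multiset.sum_nonneg
      intro x hx
      obtain ⟨m, _, rfl⟩ := Multiset.mem_map.mp hx
      positivity
    have h1 : α ^ (3*k+2) ≤ α ^ n := pow_le_pow_right₀ (le_of_lt hα) (by omega)
    have hbig : α ^ (3*k+1) + 1 < α ^ (3*k+2) := by
      have e1 : 3*k+2 = (3*k-2)+4 := by omega
      have e2 : 3*k+1 = (3*k-2)+3 := by omega
      rw [e1, e2, pow_add, pow_add]
      set B := α ^ (3*k-2) with hB
      have hB1 : 1 ≤ B := one_le_pow₀ (le_of_lt hα)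
      have hq : (1:ℝ) < α^2 + α - 1 := by nlinarith
      have hkey : B * α^4 - B * α^3 = B * (α^2 + α - 1) := by linear_combination B * hroot
      have := one_lt_mul_of_le_of_lt hB1 hq
      nlinarith
    linarith
  -- step 2 : does S contain 3k+1 ?
  by_cases hmem : (3*k+1) ∈ S
  · obtain ⟨S', rfl⟩ := Multiset.exists_cons_of_mem hmem
    rw [Multiset.map_cons, Multiset.sum_cons] at hsum
    have hS' : (S'.map (fun n => α ^ n)).sum = 1 := by linarith
    have hone_le : ∀ x ∈ S'.map (fun n => α ^ n), (1:ℝ) ≤ x := by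
      intro x hx
      obtain ⟨m, _, rfl⟩ := Multiset.mem_map.mp hx
      exact one_le_pow₀ (le_of_lt hα)
    rcases Nat.lt_or_ge S'.card 2 with hc2 | hc2
    · interval_cases h : S'.card
      · rw [Multiset.card_eq_zero.mp h] at hS'
        simp at hS'
      · obtain ⟨n, rfl⟩ := Multiset.card_eq_one.mp h
        simp only [Multiset.map_singleton, Multiset.sum_singleton] at hS'
        have hn0 : n = 0 := by
          by_contra hn
          have : α ^ 1 ≤ α ^ n := pow_le_pow_right₀ (le_of_lt hα) (by omega)
          simp only [pow_one] at this
          linarith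
        rw [hn0]
        rfl
    · exfalso
      have hcard2 : 2 ≤ (S'.map (fun n => α ^ n)).card := by
        rw [Multiset.card_map]; exact hc2
      have := Multiset.card_nsmul_le_sum hone_le
      rw [hS'] at this
      have h2 : ((S'.map (fun n => α ^ n)).card : ℝ) * 1 ≤ 1 := by
        rw [← nsmul_eq_mul]; exact_mod_cast this
      rw [mul_one] at h2
      have : (2:ℝ) ≤ ((S'.map (fun n => α ^ n)).card : ℝ) := by exact_mod_cast hcard2
      linarith
  · -- step 3 : contradiction
    exfalso
    have hub' : ∀ n ∈ S, n ≤ 3*k := by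
      intro n hn
      have := hub n hn
      rcases Nat.lt_or_ge n (3*k+1) with h | h
      · omega
      · exfalso; apply hmem; have : n = 3*k+1 := by omega
        rwa [this] at hn
    set M' : Multiset ℕ := S.map (fun n => 3*k+1 - n) with hM'
    have hM'mem : ∀ m ∈ M', 1 ≤ m := by
      intro m hm
      obtain ⟨n, hn, rfl⟩ := Multiset.mem_map.mp hm
      have := hub' n hn
      omega
    have hM'card : M'.card ≤ C := by rw [hM', Multiset.card_map]; exact hcard
    have hσ : (M'.map (fun m => γ ^ m)).sum = 1 + γ ^ (3*k+1) := by
      rw [hM', Multiset.map_map]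
      have hcongr : S.map ((fun m => γ ^ m) ∘ (fun n => 3*k+1 - n))
          = S.map (fun n => γ ^ (3*k+1) * α ^ n) := by
        apply Multiset.map_congr rfl
        intro n hn
        have hn' : n ≤ 3*k+1 := hub n hn
        simp only [Function.comp_apply]
        have : γ ^ (3*k+1) = γ ^ (3*k+1-n) * γ ^ n := by
          rw [← pow_add]; congr 1; omega
        rw [this, mul_assoc, show γ ^ n * α ^ n = (γ * α) ^ n from (mul_pow _ _ _).symm,
          inv_mul_cancel₀ (ne_of_gt hα0), one_pow, mul_one]
      rw [hcongr, Multiset.sum_map_mul_left, hsum]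
      have hone1 : γ ^ (3*k+1) * α ^ (3*k+1) = 1 := by
        rw [← mul_pow, inv_mul_cancel₀ (ne_of_gt hα0), one_pow]
      rw [mul_add, hone1, mul_one]
    -- pigeonhole : an empty interval
    obtain ⟨j, hjC, hhole⟩ : ∃ j, j ≤ C ∧ ∀ m ∈ M', ¬(D j < m ∧ m ≤ D (j+1)) := by
      by_contra hcon
      push_neg at hcon
      have h' : ∀ j : Fin (C+1), ∃ m, m ∈ M' ∧ D (j:ℕ) < m ∧ m ≤ D ((j:ℕ)+1) := by
        intro j
        obtain ⟨m, hm1, hm2, hm3⟩ := hcon (j:ℕ) (by omega)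
        exact ⟨m, hm1, hm2, hm3⟩
      choose g hgmem hglt hgle using h'
      have hginj : Function.Injective g := by
        intro a b hab
        by_contra hne
        rcases Ne.lt_or_gt (fun h : a = b => hne h) with h | h
        · have h1 : g a ≤ D ((a:ℕ)+1) := hgle a
          have h2 : D ((a:ℕ)+1) ≤ D (b:ℕ) := hDmono.monotone (by exact_mod_cast h)
          have h3 : D (b:ℕ) < g b := hglt b
          rw [hab] at h1; omega
        · have h1 : g b ≤ D ((b:ℕ)+1) := hgle b
          have h2 : D ((b:ℕ)+1) ≤ D (a:ℕ) := hDmono.monotone (by exact_mod_cast h)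
          have h3 : D (a:ℕ) < g a := hglt a
          rw [hab] at h3; omega
      have hmaps : ∀ j : Fin (C+1), g j ∈ M'.toFinset := by
        intro j; exact Multiset.mem_toFinset.mpr (hgmem j)
      have hcard1 : (Finset.univ : Finset (Fin (C+1))).card ≤ M'.toFinset.card :=
        Finset.card_le_card_of_injOn g (fun j _ => hmaps j) (hginj.injOn)
      rw [Finset.card_univ, Fintype.card_fin] at hcard1
      have hcard2 : M'.toFinset.card ≤ Multiset.card M' := Multiset.toFinset_card_le M'
      omega
    set F := M'.filter (fun m => m ≤ D j) with hF
    set R := M'.filter (fun m => ¬ m ≤ D j) with hR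
    have hFR : F + R = M' := Multiset.filter_add_not _ _
    have hsplit : (F.map (fun m => γ ^ m)).sum + (R.map (fun m => γ ^ m)).sum = 1 + γ ^ (3*k+1) := by
      rw [← Multiset.sum_add, ← Multiset.map_add, hFR, hσ]
    have hRsum_nonneg : (0:ℝ) ≤ (R.map (fun m => γ ^ m)).sum := by
      apply Multiset.sum_nonneg
      intro x hx
      obtain ⟨m, _, rfl⟩ := Multiset.mem_map.mp hx
      positivity
    have hRsum : (R.map (fun m => γ ^ m)).sum ≤ (C:ℝ) * γ ^ (D (j+1)) := by
      have hbound : ∀ x ∈ R.map (fun m => γ ^ m), x ≤ γ ^ (D (j+1) + 1) := by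
        intro x hx
        obtain ⟨m, hm, rfl⟩ := Multiset.mem_map.mp hx
        rw [hR, Multiset.mem_filter] at hm
        obtain ⟨hmM, hmgt⟩ := hm
        have := hhole m hmM
        have hmge : D (j+1) + 1 ≤ m := by omega
        exact pow_le_pow_of_le_one (le_of_lt hγ0) (le_of_lt hγ1) hmge
      have h1 := Multiset.sum_le_card_nsmul _ _ hbound
      have hcR : (R.map (fun m => γ ^ m)).card ≤ C := by
        rw [Multiset.card_map]
        calc Multiset.card R ≤ Multiset.card M' := by
              rw [hR]; exact Multiset.card_le_card (Multiset.filter_le _ _)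
          _ ≤ C := hM'card
      calc (R.map (fun m => γ ^ m)).sum
          ≤ (R.map (fun m => γ ^ m)).card • γ ^ (D (j+1) + 1) := h1
        _ = ((R.map (fun m => γ ^ m)).card : ℝ) * γ ^ (D (j+1) + 1) := by rw [nsmul_eq_mul]
        _ ≤ (C:ℝ) * γ ^ (D (j+1) + 1) := by
            apply mul_le_mul_of_nonneg_right _ (by positivity)
            exact_mod_cast hcR
        _ ≤ (C:ℝ) * γ ^ (D (j+1)) := by
            apply mul_le_mul_of_nonneg_left _ (Nat.cast_nonneg _)
            apply pow_le_pow_of_le_one (le_of_lt hγ0) (le_of_lt hγ1) (by omega)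
    -- F's sum is in V (D j)
    have hFmem : (F.map (fun m => γ ^ m)).sum ∈ V (D j) := by
      rw [hV]
      simp only [Finset.mem_image, Finset.mem_univ, true_and]
      have hFcount : ∀ i : ℕ, F.count i ≤ C := by
        intro i
        calc F.count i ≤ Multiset.card F := Multiset.count_le_card _ _
          _ ≤ Multiset.card M' := by rw [hF]; exact Multiset.card_le_card (Multiset.filter_le _ _)
          _ ≤ C := hM'card
      refine ⟨fun i => ⟨F.count ((i:ℕ)+1), by have := hFcount ((i:ℕ)+1); omega⟩, ?_⟩
      symm
      rw [Finset.sum_multiset_map_count]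
      have hsub : F.toFinset ⊆ Finset.image (fun i : Fin (D j) => (i:ℕ)+1) Finset.univ := by
        intro m hm
        rw [Multiset.mem_toFinset] at hm
        rw [hF, Multiset.mem_filter] at hm
        obtain ⟨hm1, hm2⟩ := hm
        have h1 := hM'mem m hm1
        simp only [Finset.mem_image, Finset.mem_univ, true_and]
        exact ⟨⟨m - 1, by omega⟩, by simp; omega⟩
      rw [Finset.sum_subset hsub]
      · rw [Finset.sum_image (by intro a _ b _ h; exact Fin.ext (by have h' : (a:ℕ)+1 = (b:ℕ)+1 := h; omega))]
        apply Finset.sum_congr rfl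
        intro i _
        rw [nsmul_eq_mul]
      · intro m _ hm
        rw [Multiset.count_eq_zero_of_notMem (by rwa [← Multiset.mem_toFinset])]
        simp
    have h1 : δ (D j) ≤ |(F.map (fun m => γ ^ m)).sum - 1| := hδle _ _ hFmem
    have hFval : (F.map (fun m => γ ^ m)).sum - 1 = γ ^ (3*k+1) - (R.map (fun m => γ ^ m)).sum := by
      linarith
    have hCg : (C:ℝ) * γ ^ (D (j+1)) < δ (D j) := by
      have := hnextD2 (D j)
      rwa [← hDsucc] at this
    have hγkj : γ ^ (3*k+1) < δ (D j) := lt_of_lt_of_le hγk (hδminle j hjC)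
    have h2 : |(F.map (fun m => γ ^ m)).sum - 1| < δ (D j) := by
      rw [hFval, abs_lt]
      constructor
      · have : (0:ℝ) ≤ γ ^ (3*k+1) := by positivity
        linarith
      · linarith
    linarith

theorem stmt_19 (α : ℝ) (hα : 1 < α)
    (hroot : α ^ 4 - α ^ 3 - α ^ 2 - α + 1 = 0)
    (M : AddSubmonoid ℝ)
    (hM : M = AddSubmonoid.closure (Set.range fun k : ℕ => α ^ k))
    (hatoms : ∀ a, IsAddAtomIn M a ↔ ∃ k : ℕ, a = α ^ k)
    (hatomic : ∀ x ∈ M, x ≠ 0 → ∃ l : Multiset ℝ, (∀ a ∈ l, IsAddAtomIn M a) ∧ l.sum = x) :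
    ¬ ∃ N : ℕ, ∀ x ∈ M, ∀ z z' : Multiset ℝ,
      (∀ a ∈ z, IsAddAtomIn M a) → z.sum = x →
      (∀ a ∈ z', IsAddAtomIn M a) → z'.sum = x →
      ∃ (k : ℕ) (f : Fin (k + 1) → Multiset ℝ),
        f 0 = z ∧ f (Fin.last k) = z' ∧
        (∀ i, (∀ a ∈ f i, IsAddAtomIn M a) ∧ (f i).sum = x) ∧
        (∀ i : Fin k, factDist (f i.castSucc) (f i.succ) ≤ N) := by

  classical
  rintro ⟨N, hchain⟩
  obtain ⟨k₀, hk₀1, hB⟩ := stepB α hα hroot M hM hatoms (N+2)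
  set k := max k₀ (N+1) with hkdef
  have hkk₀ : k₀ ≤ k := le_max_left _ _
  have hkN : N+1 ≤ k := le_max_right _ _
  have hk1 : 1 ≤ k := le_trans hk₀1 hkk₀
  have hα0 : (0:ℝ) < α := lt_trans one_pos hα
  have hmem : ∀ j : ℕ, α ^ j ∈ M := by
    rw [hM]; exact fun j => AddSubmonoid.subset_closure ⟨j, rfl⟩
  have hatom_pow : ∀ j : ℕ, IsAddAtomIn M (α ^ j) := fun j => (hatoms _).mpr ⟨j, rfl⟩
  set x : ℝ := α ^ (3*k+1) + 1 with hx
  have hxM : x ∈ M := by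
    have h0 : (1:ℝ) ∈ M := by have := hmem 0; simpa using this
    exact AddSubmonoid.add_mem M (hmem _) h0
  set z : Multiset ℝ := {α ^ (3*k+1), 1} with hz
  set Sexp : Multiset ℕ := 3*k ::ₘ 1 ::ₘ (Multiset.range k).map (fun j => 3*j+2) with hSexp
  set z' : Multiset ℝ := Sexp.map (fun n => α ^ n) with hz'
  have hzatoms : ∀ a ∈ z, IsAddAtomIn M a := by
    intro a ha
    rw [hz, Multiset.insert_eq_cons] at ha
    rcases Multiset.mem_cons.mp ha with h | h
    · rw [h]; exact hatom_pow _
    · rw [Multiset.mem_singleton.mp h]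
      have := hatom_pow 0
      rwa [pow_zero] at this
  have hzsum : z.sum = x := by
    rw [hz, hx, Multiset.insert_eq_cons, Multiset.sum_cons, Multiset.sum_singleton]
  have hz'atoms : ∀ a ∈ z', IsAddAtomIn M a := by
    intro a ha
    obtain ⟨n, _, rfl⟩ := Multiset.mem_map.mp ha
    exact hatom_pow n
  have hz'sum : z'.sum = x := by
    rw [hz', hSexp, Multiset.map_cons, Multiset.map_cons, Multiset.sum_cons,
      Multiset.sum_cons, Multiset.map_map, hx, long_id α hroot k hk1]
    rw [Finset.sum_eq_multiset_sum]
    rw [Finset.range_val]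
    simp only [Function.comp]
    ring
  obtain ⟨k', f, hf0, hflast, hfprops, hfd⟩ := hchain x hxM z z' hzatoms hzsum hz'atoms hz'sum
  have hz'ne : z' ≠ z := by
    intro h
    have h1 : Multiset.card z' = k + 2 := by
      rw [hz', Multiset.card_map, hSexp]
      simp [Multiset.card_cons, Multiset.card_map, Multiset.card_range]
    have h2 : Multiset.card z = 2 := by
      rw [hz, Multiset.insert_eq_cons, Multiset.card_cons, Multiset.card_singleton]
    rw [h, h2] at h1
    omega
  obtain ⟨i, hiz, hine⟩ := transition f z hf0 (by rw [hflast]; exact hz'ne)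
  have hdist := hfd i
  rw [hiz] at hdist
  unfold factDist at hdist
  have hzw : Multiset.card (z ∩ f i.succ) ≤ 2 := by
    have h1 : Multiset.card (z ∩ f i.succ) ≤ Multiset.card z :=
      Multiset.card_le_card (Multiset.inter_le_left)
    have h2 : Multiset.card z = 2 := by
      rw [hz, Multiset.insert_eq_cons, Multiset.card_cons, Multiset.card_singleton]
    omega
  have hwd : Multiset.card (f i.succ) - Multiset.card (z ∩ f i.succ) ≤ N :=
    le_trans (le_max_right _ _) hdist
  have hwcard : Multiset.card (f i.succ) ≤ N + 2 := by omega
  obtain ⟨S, hwS⟩ := exists_exp α (f i.succ)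
    (fun a ha => (hatoms a).mp ((hfprops i.succ).1 a ha))
  have hScard : Multiset.card S ≤ N + 2 := by
    rw [hwS, Multiset.card_map] at hwcard; exact hwcard
  have hSsum : (S.map (fun n => α ^ n)).sum = α ^ (3*k+1) + 1 := by
    rw [← hwS]
    exact (hfprops i.succ).2
  have hSeq := hB k hkk₀ S hScard hSsum
  apply hine
  rw [hwS, hSeq, hz]
  simp
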